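/- arXiv:1910.01676 — 2 statements merged into one kernel-verified Lean document; each statement's English description precedes it below -/
import Mathlib

section
/- Let ξ ∈ ℂ be a root of unity of order N and U an antisymmetric p×p integer matrix. The center of the quantum torus T_ξ(U) over ℂ is the monomial subalgebra A(Γ_N), where Γ_N = { k ∈ ℤ^p : ⟨k,n⟩_U ∈ Nℤ for all n ∈ ℤ^p }, and T_ξ(U) is finitely generated as a module over its center. -/
section GroupAux
variable {G : Type*} [Group G] {I : Type*}


/-- pairwise zpow commutation from single commutation with central factor -/
lemma qt_zpow_comm (u v w : G) (hw : ∀ g : G, w * g = g * w)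
    (h : u * v = w * (v * u)) (a b : ℤ) :
    u ^ a * v ^ b = w ^ (a * b) * (v ^ b * u ^ a) := by
  have hwv : Commute w v := hw v
  have hwu : Commute w u := hw u
  have h1 : SemiconjBy u v (w * v) := by
    unfold SemiconjBy
    rw [h, mul_assoc]
  have h2 := h1.zpow_right b
  have h3 : (w * v) ^ b = w ^ b * v ^ b := hwv.mul_zpow b
  have h4 : SemiconjBy (v ^ b) u ((w ^ b)⁻¹ * u) := by
    unfold SemiconjBy
    rw [mul_assoc, h2.eq, h3]
    group
  have h5 := h4.zpow_right a
  have h6 : ((w ^ b)⁻¹ * u) ^ a = (w ^ (a*b))⁻¹ * u ^ a := by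
    have : Commute ((w ^ b)⁻¹) u := (hwu.zpow_left b).inv_left
    rw [this.mul_zpow a, ← zpow_neg, ← zpow_mul, ← zpow_neg]
    ring_nf
  have h7 : v ^ b * u ^ a = (w ^ (a*b))⁻¹ * (u ^ a * v ^ b) := by
    rw [h5, h6, mul_assoc]
  rw [h7]
  group

lemma qt_move (c : G) (hc : ∀ t : G, c * t = t * c) (x y : G) :
    x * (c * y) = c * (x * y) := by
  rw [← mul_assoc, ← hc x, mul_assoc]

lemma qt_list_comm_right (g : G) (u c : I → G) :
    ∀ L : List I, (∀ i ∈ L, (∀ t : G, c i * t = t * c i) ∧ u i * g = c i * (g * u i)) →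
      (L.map u).prod * g = (L.map c).prod * (g * (L.map u).prod)
  | [], _ => by simp
  | i :: L, h => by
    have ih := qt_list_comm_right g u c L (fun j hj => h j (List.mem_cons_of_mem _ hj))
    obtain ⟨hci, hui⟩ := h i (List.mem_cons_self)
    have hC : ∀ t : G, (L.map c).prod * t = t * (L.map c).prod := by
      clear ih
      induction L with
      | nil => simp
      | cons j L ihl =>
        intro t
        have hcj := (h j (List.mem_cons_of_mem _ (List.mem_cons_self))).1
        have := ihl (fun m hm => by
          rcases List.mem_cons.1 hm with rfl | hm
          · exact h m (List.mem_cons_self)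
          · exact h m (List.mem_cons_of_mem _ (List.mem_cons_of_mem _ hm)))
        simp only [List.map_cons, List.prod_cons]
        rw [mul_assoc, this t, qt_move _ hcj]
    simp only [List.map_cons, List.prod_cons]
    calc u i * (L.map u).prod * g
        = u i * ((L.map u).prod * g) := by rw [mul_assoc]
      _ = u i * ((L.map c).prod * (g * (L.map u).prod)) := by rw [ih]
      _ = (L.map c).prod * (u i * g) * (L.map u).prod := by
          rw [qt_move _ hC]; simp only [mul_assoc]
      _ = (L.map c).prod * (c i * (g * u i)) * (L.map u).prod := by rw [hui]
      _ = c i * (L.map c).prod * (g * (u i * (L.map u).prod)) := by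
          rw [← hC (c i)]; simp only [mul_assoc]

lemma qt_list_comm_left (S : Subgroup G) (hS : ∀ c ∈ S, ∀ t : G, c * t = t * c)
    (g : G) (u : I → G) :
    ∀ L : List I, (∀ i ∈ L, ∃ c ∈ S, g * u i = c * (u i * g)) →
      ∃ C ∈ S, g * (L.map u).prod = C * ((L.map u).prod * g)
  | [], _ => ⟨1, S.one_mem, by simp⟩
  | i :: L, h => by
    obtain ⟨C, hC, ih⟩ := qt_list_comm_left S hS g u L (fun j hj => h j (List.mem_cons_of_mem _ hj))
    obtain ⟨c, hc, hgi⟩ := h i (List.mem_cons_self)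
    refine ⟨c * C, S.mul_mem hc hC, ?_⟩
    simp only [List.map_cons, List.prod_cons]
    calc g * (u i * (L.map u).prod)
        = (g * u i) * (L.map u).prod := by rw [mul_assoc]
      _ = c * (u i * (g * (L.map u).prod)) := by rw [hgi]; simp only [mul_assoc]
      _ = c * (u i * (C * ((L.map u).prod * g))) := by rw [ih]
      _ = c * C * (u i * (L.map u).prod * g) := by
          rw [qt_move _ (hS C hC)]; simp only [mul_assoc]

lemma qt_list_prod (S : Subgroup G) (hS : ∀ c ∈ S, ∀ t : G, c * t = t * c)
    (v : I → G) (a b : I → ℤ)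
    (hv : ∀ i j : I, ∀ m n : ℤ, ∃ c ∈ S, v i ^ m * v j ^ n = c * (v j ^ n * v i ^ m)) :
    ∀ L : List I,
      ∃ C ∈ S, (L.map fun i => v i ^ a i).prod * (L.map fun i => v i ^ b i).prod
        = C * (L.map fun i => v i ^ (a i + b i)).prod
  | [] => ⟨1, S.one_mem, by simp⟩
  | i :: L => by
    obtain ⟨C, hC, ih⟩ := qt_list_prod S hS v a b hv L
    obtain ⟨c, hc, hgi⟩ :=
      qt_list_comm_left S hS (v i ^ b i) (fun j => v j ^ a j) L
        (fun j _ => hv i j (b i) (a j))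
    refine ⟨c⁻¹ * C, S.mul_mem (S.inv_mem hc) hC, ?_⟩
    simp only [List.map_cons, List.prod_cons]
    have hcinv : ∀ t : G, c⁻¹ * t = t * c⁻¹ := hS c⁻¹ (S.inv_mem hc)
    have hmid : (L.map fun j => v j ^ a j).prod * v i ^ b i
        = c⁻¹ * (v i ^ b i * (L.map fun j => v j ^ a j).prod) := by
      rw [hgi]; group
    calc v i ^ a i * (L.map fun j => v j ^ a j).prod * (v i ^ b i * (L.map fun j => v j ^ b j).prod)
        = v i ^ a i * (((L.map fun j => v j ^ a j).prod * v i ^ b i) * (L.map fun j => v j ^ b j).prod) := by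
          simp only [mul_assoc]
      _ = v i ^ a i * ((c⁻¹ * (v i ^ b i * (L.map fun j => v j ^ a j).prod)) * (L.map fun j => v j ^ b j).prod) := by
          rw [hmid]
      _ = c⁻¹ * (v i ^ a i * (v i ^ b i * ((L.map fun j => v j ^ a j).prod * (L.map fun j => v j ^ b j).prod))) := by
          simp only [mul_assoc]; rw [qt_move _ hcinv]
      _ = c⁻¹ * (v i ^ a i * (v i ^ b i * (C * (L.map fun j => v j ^ (a j + b j)).prod))) := by
          rw [ih]
      _ = c⁻¹ * C * (v i ^ (a i + b i) * (L.map fun j => v j ^ (a j + b j)).prod) := by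
          rw [qt_move _ (hS C hC), qt_move _ (hS C hC), ← mul_assoc (v i ^ a i), ← zpow_add]
          simp only [mul_assoc]

lemma qt_prod_zpow (t : G) (e : I → ℤ) :
    ∀ L : List I, (L.map fun i => t ^ e i).prod = t ^ (L.map e).sum
  | [] => by simp
  | i :: L => by
    simp only [List.map_cons, List.prod_cons, List.sum_cons, zpow_add, qt_prod_zpow t e L]

end GroupAux



open scoped BigOperators

/-- Exponent appearing in the Weyl normalization of a monomial:
`∑_{i<j} U_{ij} k_i k_j`. -/
def weylExp {p : ℕ} (U : Matrix (Fin p) (Fin p) ℤ) (k : Fin p → ℤ) : ℤ :=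
  ∑ i, ∑ j, if i < j then U i j * k i * k j else 0

/-- The ordered product `x₁^{k₁} ⋯ x_p^{k_p}`. -/
def orderedProd {p : ℕ} {A : Type} [Monoid A] (x : Fin p → Aˣ) (k : Fin p → ℤ) : A :=
  (((List.finRange p).map fun i => ((x i ^ k i : Aˣ) : A)).prod)

/-- The Weyl-normalized monomial
`X^k = q^{-(1/2)∑_{i<j} U_{ij} k_i k_j} x₁^{k₁} ⋯ x_p^{k_p}`, where `s = q^{1/2}`. -/
def normMono {R : Type} [CommRing R] {p : ℕ} {A : Type} [Ring A] [Algebra R A]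
    (s : Rˣ) (U : Matrix (Fin p) (Fin p) ℤ) (x : Fin p → Aˣ) (k : Fin p → ℤ) : A :=
  ((s ^ (-(weylExp U k)) : Rˣ) : R) • orderedProd x k

/-- The antisymmetric bilinear form `⟨k,n⟩_U = ∑_{i,j} U_{ij} k_i n_j`. -/
def formU {p : ℕ} (U : Matrix (Fin p) (Fin p) ℤ) (k n : Fin p → ℤ) : ℤ :=
  ∑ i, ∑ j, U i j * k i * n j

/-- `A` (with distinguished invertible generators `x i` and basis `b` of normalized
monomials) is the quantum torus over `R` associated to `U` with quantum parameter
`q = s²`: the generators satisfy `x_i x_j = q^{U_{ij}} x_j x_i` and the Weyl-normalized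
monomials `X^k`, `k ∈ ℤ^p`, form an `R`-basis of `A`. -/
def IsQuantumTorus {R : Type} [CommRing R] {p : ℕ} {A : Type} [Ring A] [Algebra R A]
    (s : Rˣ) (U : Matrix (Fin p) (Fin p) ℤ) (x : Fin p → Aˣ)
    (b : Module.Basis (Fin p → ℤ) R A) : Prop :=
  (∀ i j, (x i : A) * (x j : A) = ((s ^ (2 * U i j) : Rˣ) : R) • ((x j : A) * (x i : A)))
  ∧ ∀ k : Fin p → ℤ, b k = normMono s U x k

/-- Let `ξ ∈ ℂ` be a root of unity of order `N` and `U` antisymmetric. The center of the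
quantum torus `T_ξ(U)` is the monomial subalgebra `A(Γ_N)` where
`Γ_N = {k : ⟨k,n⟩_U ∈ Nℤ for all n}`, and `T_ξ(U)` is finitely generated as a module
over its center. -/

theorem center_quantumTorus_rootOfUnity {p : ℕ} (U : Matrix (Fin p) (Fin p) ℤ)
    (hU : ∀ i j, U j i = -U i j) (ξ s : ℂˣ) (hs : s ^ 2 = ξ)
    (N : ℕ) (hN : 0 < N) (hord : orderOf ξ = N)
    {A : Type} [Ring A] [Algebra ℂ A]
    (x : Fin p → Aˣ) (b : Module.Basis (Fin p → ℤ) ℂ A) (h : IsQuantumTorus s U x b) :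
    (Subalgebra.center ℂ A : Set A)
      = (Submodule.span ℂ
          {a : A | ∃ k : Fin p → ℤ, (∀ n : Fin p → ℤ, (N : ℤ) ∣ formU U k n) ∧ a = b k}
          : Set A)
    ∧ Module.Finite (Subalgebra.center ℂ A) A := by
  obtain ⟨hcomm, hb⟩ := h
  -- the scalars, as central units of `A`
  set σ : ℂˣ →* Aˣ := Units.map (algebraMap ℂ A).toMonoidHom with hσdef
  have hσval : ∀ c : ℂˣ, ((σ c : Aˣ) : A) = algebraMap ℂ A (c : ℂ) := fun c => rfl
  have hσsmul : ∀ (c : ℂˣ) (z : A), ((σ c : Aˣ) : A) * z = (c : ℂ) • z := by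
    intro c z; rw [hσval, ← Algebra.smul_def]
  have hσcentral : ∀ (c : ℂˣ) (g : Aˣ), σ c * g = g * σ c := by
    intro c g
    apply Units.ext
    show ((σ c : Aˣ) : A) * g = g * ((σ c : Aˣ) : A)
    rw [hσval]
    exact (Algebra.commutes _ _)
  have hS : ∀ c ∈ σ.range, ∀ t : Aˣ, c * t = t * c := by
    rintro _ ⟨d, rfl⟩ t; exact hσcentral d t
  -- the ordered monomials, as units
  set P : (Fin p → ℤ) → Aˣ := fun k => ((List.finRange p).map fun i => x i ^ k i).prod
    with hPdef
  have hPval : ∀ k, ((P k : Aˣ) : A) = orderedProd x k := by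
    intro k
    rw [hPdef, orderedProd]
    rw [← Units.coeHom_apply, ← List.prod_hom _ (Units.coeHom A), List.map_map]
    rfl
  -- commutation relation at the level of units
  have hxrel : ∀ i j, x i * x j = σ (s ^ (2 * U i j)) * (x j * x i) := by
    intro i j
    apply Units.ext
    show ((x i : A)) * (x j : A) = ((σ (s ^ (2 * U i j)) : Aˣ) : A) * ((x j : A) * (x i : A))
    rw [hσsmul, hcomm i j]
  have hxpow : ∀ (i j : Fin p) (m n : ℤ),
      x i ^ m * x j ^ n = σ (s ^ (2 * U i j)) ^ (m * n) * (x j ^ n * x i ^ m) :=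
    fun i j m n => qt_zpow_comm _ _ _ (hσcentral _) (hxrel i j) m n
  -- exact commutation of ordered monomials
  have hWc : ∀ (e : ℤ) (t : Aˣ), σ s ^ e * t = t * σ s ^ e :=
    fun e t => hS _ ⟨s ^ e, map_zpow σ s e⟩ t
  have hxpow' : ∀ (i j : Fin p) (m n : ℤ),
      x i ^ m * x j ^ n = σ s ^ (2 * U i j * (m * n)) * (x j ^ n * x i ^ m) := by
    intro i j m n
    rw [hxpow i j m n, map_zpow, ← zpow_mul]
  have hprodW : ∀ e : Fin p → ℤ,
      (((List.finRange p).map fun i => σ s ^ e i).prod) = σ s ^ (∑ i, e i) := by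
    intro e
    rw [qt_prod_zpow (σ s) e (List.finRange p), Fin.sum_univ_def]
  have step1 : ∀ (k n : Fin p → ℤ) (j : Fin p),
      x j ^ k j * P n = σ s ^ (-(∑ i, 2 * U i j * (n i * k j))) * (P n * x j ^ k j) := by
    intro k n j
    have h1 : P n * (x j ^ k j)
        = (((List.finRange p).map fun i => σ s ^ (2 * U i j * (n i * k j))).prod)
          * ((x j ^ k j) * P n) :=
      qt_list_comm_right _ _ _ _ (fun i _ => ⟨hWc _, hxpow' i j (n i) (k j)⟩)
    rw [hprodW] at h1
    rw [h1, qt_move _ (hWc _), ← mul_assoc, ← zpow_add, add_neg_cancel, zpow_zero, one_mul]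
  have hPcomm : ∀ k n, P k * P n = σ (s ^ (2 * formU U k n)) * (P n * P k) := by
    intro k n
    have h2 : P k * P n
        = (((List.finRange p).map fun j =>
            σ s ^ (-(∑ i, 2 * U i j * (n i * k j)))).prod) * (P n * P k) :=
      qt_list_comm_right _ _ _ _ (fun j _ => ⟨hWc _, step1 k n j⟩)
    rw [hprodW] at h2
    have hexp : (∑ j, -(∑ i, 2 * U i j * (n i * k j))) = 2 * formU U k n := by
      have hterm : ∀ j : Fin p, -(∑ i, 2 * U i j * (n i * k j))
          = ∑ i, 2 * U j i * (k j * n i) := by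
        intro j
        rw [← Finset.sum_neg_distrib]
        refine Finset.sum_congr rfl fun i _ => ?_
        rw [hU j i]; ring
      rw [Finset.sum_congr rfl fun j _ => hterm j]
      simp only [formU, Finset.mul_sum]
      exact Finset.sum_congr rfl fun i _ => Finset.sum_congr rfl fun j _ => by ring
    rw [h2, hexp, map_zpow]
  -- product of ordered monomials, up to a scalar
  have hPprod : ∀ k n : Fin p → ℤ, ∃ c : ℂˣ, P k * P n = σ c * P (k + n) := by
    intro k n
    obtain ⟨C, hC, hCe⟩ := qt_list_prod σ.range hS x k n
      (fun i j m' n' => ⟨σ (s ^ (2 * U i j)) ^ (m' * n'),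
        ⟨(s ^ (2 * U i j)) ^ (m' * n'), map_zpow σ _ _⟩, hxpow i j m' n'⟩)
      (List.finRange p)
    obtain ⟨c, rfl⟩ := hC
    exact ⟨c, hCe⟩
  -- the basis vectors as scalar multiples of the unit monomials
  have hbP : ∀ k, b k = ((s ^ (-weylExp U k) : ℂˣ) : ℂ) • ((P k : Aˣ) : A) := by
    intro k; rw [hb k, normMono, hPval]
  have hPb : ∀ k, ((P k : Aˣ) : A) = ((s ^ (weylExp U k) : ℂˣ) : ℂ) • b k := by
    intro k
    rw [hbP k, smul_smul, ← Units.val_mul, ← zpow_add, add_neg_cancel, zpow_zero,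
      Units.val_one, one_smul]
  -- commutation for basis vectors
  have hsξ : ∀ f : ℤ, s ^ (2 * f) = ξ ^ f := by
    intro f
    rw [← hs, ← zpow_natCast s 2, ← zpow_mul]
    norm_num
  have hbcomm : ∀ k n, b k * b n = ((ξ ^ formU U k n : ℂˣ) : ℂ) • (b n * b k) := by
    intro k n
    have hPP : ((P k : Aˣ) : A) * ((P n : Aˣ) : A)
        = ((s ^ (2 * formU U k n) : ℂˣ) : ℂ) • (((P n : Aˣ) : A) * ((P k : Aˣ) : A)) := by
      rw [← Units.val_mul, hPcomm k n, Units.val_mul, hσsmul, Units.val_mul]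
    rw [hbP k, hbP n, smul_mul_smul_comm, smul_mul_smul_comm, hPP, smul_smul, smul_smul]
    congr 1
    rw [← Units.val_mul, ← Units.val_mul, ← Units.val_mul, ← Units.val_mul]
    congr 1
    rw [hsξ]
    simp [mul_comm, mul_assoc, mul_left_comm]
  -- root of unity facts
  have hξpow : ∀ m : ℤ, (N : ℤ) ∣ m → ξ ^ m = 1 := by
    intro m hm
    rw [← orderOf_dvd_iff_zpow_eq_one, hord]
    exact hm
  -- antisymmetry of the form
  have hanti : ∀ k n, formU U n k = -formU U k n := by
    intro k n
    simp only [formU]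
    calc ∑ i, ∑ j, U i j * n i * k j = ∑ j, ∑ i, U i j * n i * k j := Finset.sum_comm
      _ = ∑ j, ∑ i, -(U j i * k j * n i) := by
          refine Finset.sum_congr rfl fun j _ => Finset.sum_congr rfl fun i _ => ?_
          rw [hU j i]; ring
      _ = -∑ j, ∑ i, U j i * k j * n i := by
          simp only [Finset.sum_neg_distrib]
  -- central monomials
  have hcentral : ∀ k, (∀ n, (N : ℤ) ∣ formU U k n) → b k ∈ Subalgebra.center ℂ A := by
    intro k hk
    rw [Subalgebra.mem_center_iff]
    have : LinearMap.mulLeft ℂ (b k) = LinearMap.mulRight ℂ (b k) := by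
      apply b.ext
      intro n
      rw [LinearMap.mulLeft_apply, LinearMap.mulRight_apply, hbcomm k n,
        hξpow _ (hk n), Units.val_one, one_smul]
    intro g
    have := LinearMap.congr_fun this g
    rw [LinearMap.mulLeft_apply, LinearMap.mulRight_apply] at this
    exact this.symm
  classical
  -- decomposition of elements in the basis
  have hdecomp : ∀ a : A, ∑ j ∈ (b.repr a).support, b.repr a j • b j = a := by
    intro a
    conv_rhs => rw [← b.linearCombination_repr a]
    rw [Finsupp.linearCombination_apply, Finsupp.sum]
  -- conjugation formula
  have hconjP : ∀ n j, P n * P j * (P n)⁻¹ = σ (s ^ (2 * formU U n j)) * P j := by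
    intro n j
    rw [hPcomm n j, mul_assoc, mul_inv_cancel_right]
  have hφb : ∀ (n j : Fin p → ℤ),
      ((P n : Aˣ) : A) * (b j * (((P n)⁻¹ : Aˣ) : A))
        = ((ξ ^ formU U n j : ℂˣ) : ℂ) • b j := by
    intro n j
    conv_rhs => rw [hbP j]
    rw [hbP j, smul_mul_assoc, mul_smul_comm, ← Units.val_mul, ← Units.val_mul, ← mul_assoc,
      hconjP n j, Units.val_mul, hσsmul, smul_smul, smul_smul]
    congr 1
    rw [← Units.val_mul, ← Units.val_mul, hsξ]
    exact congrArg Units.val (mul_comm _ _)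
  -- part 1: the center is contained in the span
  have hsub1 : (Subalgebra.center ℂ A : Set A)
      ⊆ (Submodule.span ℂ
        {a : A | ∃ k : Fin p → ℤ, (∀ n : Fin p → ℤ, (N : ℤ) ∣ formU U k n) ∧ a = b k}
        : Set A) := by
    intro a ha
    rw [SetLike.mem_coe, Subalgebra.mem_center_iff] at ha
    have key : ∀ (n : Fin p → ℤ), ∀ j ∈ (b.repr a).support,
        b.repr a j * ((ξ ^ formU U n j : ℂˣ) : ℂ) - b.repr a j = 0 := by
      intro n
      set φ : A →ₗ[ℂ] A :=
        (LinearMap.mulLeft ℂ ((P n : Aˣ) : A)).comp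
          (LinearMap.mulRight ℂ (((P n)⁻¹ : Aˣ) : A)) with hφdef
      have hφapply : ∀ z : A, φ z = ((P n : Aˣ) : A) * (z * (((P n)⁻¹ : Aˣ) : A)) :=
        fun z => rfl
      have h1 : φ a = a := by
        rw [hφapply, ← ha, ← mul_assoc, ← Units.val_mul, mul_inv_cancel, Units.val_one, one_mul]
      have h2 : φ a = ∑ j ∈ (b.repr a).support,
          (b.repr a j * ((ξ ^ formU U n j : ℂˣ) : ℂ)) • b j := by
        conv_lhs => rw [← hdecomp a]
        rw [map_sum]
        refine Finset.sum_congr rfl fun j _ => ?_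
        rw [map_smul, hφapply, hφb n j, smul_smul]
      have h3 : ∑ j ∈ (b.repr a).support,
          (b.repr a j * ((ξ ^ formU U n j : ℂˣ) : ℂ) - b.repr a j) • b j = 0 := by
        simp only [sub_smul, Finset.sum_sub_distrib]
        rw [← h2, hdecomp a, h1, sub_self]
      exact linearIndependent_iff'.1 b.linearIndependent _ _ h3
    rw [SetLike.mem_coe, ← hdecomp a]
    refine Submodule.sum_mem _ fun j hj => Submodule.smul_mem _ _ (Submodule.subset_span ?_)
    refine ⟨j, fun n => ?_, rfl⟩
    have hcj : b.repr a j ≠ 0 := Finsupp.mem_support_iff.1 hj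
    have h4 := key n j hj
    have h5 : ((ξ ^ formU U n j : ℂˣ) : ℂ) = 1 := by
      have h := sub_eq_zero.1 h4
      exact mul_left_cancel₀ hcj (by rw [h, mul_one])
    have h6 : ξ ^ formU U n j = 1 := Units.val_eq_one.1 h5
    have h7 : (N : ℤ) ∣ formU U n j := by
      rw [← hord]
      exact orderOf_dvd_iff_zpow_eq_one.2 h6
    rw [hanti j n] at h7
    exact (dvd_neg).1 h7
  -- part 2: the span is contained in the center
  have hsub2 : (Submodule.span ℂ
        {a : A | ∃ k : Fin p → ℤ, (∀ n : Fin p → ℤ, (N : ℤ) ∣ formU U k n) ∧ a = b k}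
        : Set A) ⊆ (Subalgebra.center ℂ A : Set A) := by
    have hle : Submodule.span ℂ
        {a : A | ∃ k : Fin p → ℤ, (∀ n : Fin p → ℤ, (N : ℤ) ∣ formU U k n) ∧ a = b k}
        ≤ Subalgebra.toSubmodule (Subalgebra.center ℂ A) := by
      rw [Submodule.span_le]
      rintro a ⟨k, hk, rfl⟩
      exact hcentral k hk
    intro a ha
    exact hle ha
  refine ⟨Set.Subset.antisymm hsub1 hsub2, ?_⟩
  -- finite generation over the center
  refine ⟨⟨Finset.image (fun r : Fin p → Fin N => b fun i => ((r i : ℕ) : ℤ)) Finset.univ, ?_⟩⟩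
  rw [Submodule.eq_top_iff']
  set T : Finset A :=
    Finset.image (fun r : Fin p → Fin N => b fun i => ((r i : ℕ) : ℤ)) Finset.univ with hT
  set M : Submodule (Subalgebra.center ℂ A) A := Submodule.span (Subalgebra.center ℂ A) ↑T
    with hM
  have hsmulM : ∀ (c : ℂ) (z : A), z ∈ M → c • z ∈ M := by
    intro c z hz
    have : c • z = (⟨algebraMap ℂ A c, Subalgebra.algebraMap_mem _ c⟩ :
        Subalgebra.center ℂ A) • z := by
      rw [Algebra.smul_def]; rfl
    rw [this]
    exact Submodule.smul_mem _ _ hz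
  have hbM : ∀ k : Fin p → ℤ, b k ∈ M := by
    intro k
    set m : Fin p → ℤ := fun i => k i / N with hm
    set kN : Fin p → ℤ := fun i => (N : ℤ) * m i with hkN
    set r : Fin p → ℤ := fun i => k i % N with hr
    have hkdec : kN + r = k := funext fun i => Int.mul_ediv_add_emod (k i) N
    have hkc : b kN ∈ Subalgebra.center ℂ A := by
      refine hcentral kN fun n => ⟨formU U m n, ?_⟩
      simp only [formU, Finset.mul_sum, hkN]
      exact Finset.sum_congr rfl fun i _ => Finset.sum_congr rfl fun j _ => by ring
    have hrN : ∀ i, 0 ≤ k i % N ∧ k i % N < N := fun i =>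
      ⟨Int.emod_nonneg _ (by exact_mod_cast hN.ne'), Int.emod_lt_of_pos _ (by exact_mod_cast hN)⟩
    have hbrT : b r ∈ T := by
      refine Finset.mem_image.2 ⟨fun i => ⟨(k i % N).toNat, by have := hrN i; omega⟩,
        Finset.mem_univ _, ?_⟩
      congr 1
      funext i
      have := (hrN i).1
      simp only [hr]
      omega
    obtain ⟨c, hc⟩ := hPprod kN r
    rw [hkdec] at hc
    have hPk : ((P k : Aˣ) : A) = ((c⁻¹ : ℂˣ) : ℂ) • (((P kN : Aˣ) : A) * ((P r : Aˣ) : A)) := by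
      have h5 : P k = (σ c)⁻¹ * (P kN * P r) := by rw [hc]; group
      rw [h5, ← map_inv, Units.val_mul, hσsmul, Units.val_mul]
    have hbkr : ∃ d : ℂ, b k = d • (b kN * b r) :=
      ⟨_, by rw [hbP k, hPk, hPb kN, hPb r, smul_mul_smul_comm, smul_smul, smul_smul]⟩
    obtain ⟨d, hd⟩ := hbkr
    have hdk : d • b kN ∈ Subalgebra.center ℂ A := (Subalgebra.center ℂ A).smul_mem hkc d
    have hfin : b k = (⟨d • b kN, hdk⟩ : Subalgebra.center ℂ A) • b r := by
      rw [hd, ← smul_mul_assoc]; rfl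
    rw [hfin]
    exact Submodule.smul_mem _ _ (Submodule.subset_span hbrT)
  intro a
  rw [← hdecomp a]
  exact Submodule.sum_mem _ fun j _ => hsmulM _ _ (hbM j)
end

section
/- Let q be an element of a commutative domain R that is not a root of unity, let U be an antisymmetric p×p integer matrix, and T(U) the quantum torus over R. Then the center of T(U) is the R-span of the normalized monomials X^k with k ∈ ker U, i.e., with ⟨k, l⟩_U = 0 for all l ∈ ℤ^p. -/
open scoped BigOperators

section GroupAux
variable {G : Type*} [Group G]

lemma qt_conj_zpow_aux (a c u : G) (hub : Commute u c)
    (h : a * c = u * (c * a)) (n : ℤ) : a * c ^ n = u ^ n * (c ^ n * a) := by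
  have h1 : a * c * a⁻¹ = u * c := by
    rw [show a * c = u * (c * a) from h]; group
  calc a * c ^ n = (a * c * a⁻¹) ^ n * a := by rw [conj_zpow]; group
    _ = (u * c) ^ n * a := by rw [h1]
    _ = u ^ n * c ^ n * a := by rw [hub.mul_zpow]
    _ = u ^ n * (c ^ n * a) := by rw [mul_assoc]

lemma qt_zpow_zpow (a c u : G) (hua : Commute u a) (hub : Commute u c)
    (h : a * c = u * (c * a)) (m n : ℤ) :
    a ^ m * c ^ n = u ^ (m * n) * (c ^ n * a ^ m) := by
  have hn := qt_conj_zpow_aux a c u hub h n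
  have h2 : c ^ n * a = (u ^ n)⁻¹ * (a * c ^ n) := by rw [hn]; group
  have hcomm : Commute ((u ^ n)⁻¹) a := (hua.zpow_left n).inv_left
  have hm := qt_conj_zpow_aux (c ^ n) a ((u ^ n)⁻¹) hcomm h2 m
  rw [hm]; group
end GroupAux

section ListAux
variable {p : ℕ} {G : Type*} [Group G]

/-- ordered product over a list of indices -/
def qtPL (x : Fin p → G) (k : Fin p → ℤ) (L : List (Fin p)) : G :=
  (L.map fun i => x i ^ k i).prod

/-- scalar exponent collected when merging two ordered products -/
def qtC (U : Matrix (Fin p) (Fin p) ℤ) (k l : Fin p → ℤ) : List (Fin p) → ℤ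
  | [] => 0
  | a :: L => -(l a * (L.map fun i => 2 * U a i * k i).sum) + qtC U k l L

variable (U : Matrix (Fin p) (Fin p) ℤ) (t : G) (x : Fin p → G)
variable (ht : ∀ g : G, Commute t g)
variable (hx : ∀ i j, x i * x j = t ^ (2 * U i j) * (x j * x i))

include ht hx in
lemma qt_move_s15 (k : Fin p → ℤ) (j : Fin p) (n : ℤ) (L : List (Fin p)) :
    x j ^ n * qtPL x k L
      = t ^ (n * (L.map fun i => 2 * U j i * k i).sum) * (qtPL x k L * x j ^ n) := by
  induction L with
  | nil => simp [qtPL]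
  | cons a L ih =>
    have h1 := qt_zpow_zpow (x j) (x a) (t ^ (2 * U j a))
      ((ht (x j)).zpow_left _) ((ht (x a)).zpow_left _) (hx j a) n (k a)
    have hP : qtPL x k (a :: L) = x a ^ k a * qtPL x k L := by
      simp [qtPL]
    rw [hP]
    calc x j ^ n * (x a ^ k a * qtPL x k L)
        = (x j ^ n * x a ^ k a) * qtPL x k L := by rw [mul_assoc]
      _ = ((t ^ (2 * U j a)) ^ (n * k a) * (x a ^ k a * x j ^ n)) * qtPL x k L := by
          rw [h1]
      _ = t ^ (2 * U j a * (n * k a)) * (x a ^ k a * (x j ^ n * qtPL x k L)) := by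
          rw [← zpow_mul]; group
      _ = t ^ (2 * U j a * (n * k a)) * (x a ^ k a *
            (t ^ (n * (L.map fun i => 2 * U j i * k i).sum) * (qtPL x k L * x j ^ n))) := by
          rw [ih]
      _ = t ^ (2 * U j a * (n * k a)) * (t ^ (n * (L.map fun i => 2 * U j i * k i).sum) *
            (x a ^ k a * (qtPL x k L * x j ^ n))) := by
          rw [((ht (x a ^ k a)).zpow_left _).symm.left_comm]
      _ = t ^ (n * ((a :: L).map fun i => 2 * U j i * k i).sum) *
            (qtPL x k (a :: L) * x j ^ n) := by
          rw [← mul_assoc, ← zpow_add, hP]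
          have : 2 * U j a * (n * k a) + n * (L.map fun i => 2 * U j i * k i).sum
              = n * ((a :: L).map fun i => 2 * U j i * k i).sum := by
            simp [List.map_cons]; ring
          rw [this]; group

include ht hx in
lemma qt_merge (k l : Fin p → ℤ) (L : List (Fin p)) :
    qtPL x k L * qtPL x l L = t ^ qtC U k l L * qtPL x (k + l) L := by
  induction L with
  | nil => simp [qtPL, qtC]
  | cons a L ih =>
    have hPk : qtPL x k (a :: L) = x a ^ k a * qtPL x k L := by simp [qtPL]
    have hPl : qtPL x l (a :: L) = x a ^ l a * qtPL x l L := by simp [qtPL]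
    have hPkl : qtPL x (k + l) (a :: L) = x a ^ (k a + l a) * qtPL x (k + l) L := by
      simp [qtPL]
    set e := (l a) * (L.map fun i => 2 * U a i * k i).sum with he
    have hmv := qt_move_s15 U t x ht hx k a (l a) L
    have hmv2 : qtPL x k L * x a ^ l a = t ^ (-e) * (x a ^ l a * qtPL x k L) := by
      rw [hmv, he]; group
    rw [hPk, hPl, hPkl]
    calc (x a ^ k a * qtPL x k L) * (x a ^ l a * qtPL x l L)
        = x a ^ k a * (qtPL x k L * x a ^ l a) * qtPL x l L := by group
      _ = x a ^ k a * (t ^ (-e) * (x a ^ l a * qtPL x k L)) * qtPL x l L := by rw [hmv2]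
      _ = t ^ (-e) * (x a ^ k a * (x a ^ l a * (qtPL x k L * qtPL x l L))) := by
          rw [((ht (x a ^ k a)).zpow_left (-e)).symm.left_comm]; group
      _ = t ^ (-e) * (x a ^ (k a + l a) * (t ^ qtC U k l L * qtPL x (k + l) L)) := by
          rw [ih]; group
      _ = t ^ (-e) * (t ^ qtC U k l L * (x a ^ (k a + l a) * qtPL x (k + l) L)) := by
          rw [((ht (x a ^ (k a + l a))).zpow_left _).symm.left_comm]
      _ = t ^ qtC U k l (a :: L) * (x a ^ (k a + l a) * qtPL x (k + l) L) := by
          rw [← mul_assoc, ← zpow_add, qtC]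

end ListAux

section Sums
variable {p : ℕ} (U : Matrix (Fin p) (Fin p) ℤ) (k l : Fin p → ℤ)

lemma qt_weyl_add : weylExp U (k + l) = weylExp U k + weylExp U l
    + ((∑ i, ∑ j, if i < j then U i j * k i * l j else 0)
      + (∑ i, ∑ j, if i < j then U i j * k j * l i else 0)) := by
  unfold weylExp
  simp only [← Finset.sum_add_distrib]
  refine Finset.sum_congr rfl fun i _ => Finset.sum_congr rfl fun j _ => ?_
  by_cases hij : i < j <;> simp [hij, Pi.add_apply] <;> ring

lemma qt_formU_eq (hU : ∀ i j, U j i = -U i j) :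
    formU U k l = (∑ i, ∑ j, if i < j then U i j * k i * l j else 0)
      - (∑ i, ∑ j, if i < j then U i j * k j * l i else 0) := by
  have hdiag : ∀ i, U i i = 0 := fun i => by have := hU i i; omega
  have h1 : formU U k l = (∑ i, ∑ j, if i < j then U i j * k i * l j else 0)
      + (∑ i, ∑ j, if j < i then U i j * k i * l j else 0) := by
    unfold formU
    simp only [← Finset.sum_add_distrib]
    refine Finset.sum_congr rfl fun i _ => Finset.sum_congr rfl fun j _ => ?_
    rcases lt_trichotomy i j with h | h | h
    · simp [h, not_lt.mpr h.le]
    · subst h; simp [hdiag i]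
    · simp [h, not_lt.mpr h.le]
  have h2 : (∑ i, ∑ j, if j < i then U i j * k i * l j else 0)
      + (∑ i, ∑ j, if i < j then U i j * k j * l i else 0) = 0 := by
    rw [Finset.sum_comm (f := fun i j => if j < i then U i j * k i * l j else 0)]
    simp only [← Finset.sum_add_distrib]
    refine Finset.sum_eq_zero fun a _ => Finset.sum_eq_zero fun c _ => ?_
    by_cases h : a < c
    · simp only [h, if_true]
      rw [hU a c]; ring
    · simp [h]
  linarith [h1, h2]

lemma qt_formU_skew (hU : ∀ i j, U j i = -U i j) : formU U l k = -formU U k l := by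
  rw [qt_formU_eq U k l hU, qt_formU_eq U l k hU]
  have e1 : (∑ i, ∑ j, if i < j then U i j * l i * k j else 0)
      = ∑ i, ∑ j, if i < j then U i j * k j * l i else 0 := by
    refine Finset.sum_congr rfl fun i _ => Finset.sum_congr rfl fun j _ => ?_
    by_cases h : i < j <;> simp [h] <;> ring
  have e2 : (∑ i, ∑ j, if i < j then U i j * l j * k i else 0)
      = ∑ i, ∑ j, if i < j then U i j * k i * l j else 0 := by
    refine Finset.sum_congr rfl fun i _ => Finset.sum_congr rfl fun j _ => ?_
    by_cases h : i < j <;> simp [h] <;> ring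
  rw [e1, e2]; ring

lemma qtC_pairwise : ∀ L : List (Fin p), L.Pairwise (· < ·) →
    qtC U k l L
      = -(L.map fun a => (L.map fun i => if a < i then 2 * U a i * k i * l a else 0).sum).sum := by
  intro L hL
  induction L with
  | nil => simp [qtC]
  | cons a L ih =>
    rw [List.pairwise_cons] at hL
    obtain ⟨h1, h2⟩ := hL
    have inner_a : ((a :: L).map fun i => if a < i then 2 * U a i * k i * l a else 0).sum
        = (L.map fun i => 2 * U a i * k i * l a).sum := by
      simp only [List.map_cons, List.sum_cons, lt_irrefl, if_false]
      rw [List.map_congr_left fun i hi => if_pos (h1 i hi)]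
      simp
    have inner_x : ∀ x ∈ L, ((a :: L).map fun i => if x < i then 2 * U x i * k i * l x else 0).sum
        = (L.map fun i => if x < i then 2 * U x i * k i * l x else 0).sum := by
      intro x hx
      simp only [List.map_cons, List.sum_cons, not_lt.mpr (h1 x hx).le, if_false]
      simp [not_lt.mpr (h1 x hx).le]
    have hsum : (L.map fun i => 2 * U a i * k i * l a).sum
        = l a * (L.map fun i => 2 * U a i * k i).sum := by
      rw [← List.sum_map_mul_left, List.map_congr_left]
      intro i _; ring
    calc qtC U k l (a :: L)
        = -(l a * (L.map fun i => 2 * U a i * k i).sum) + qtC U k l L := rfl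
      _ = -(l a * (L.map fun i => 2 * U a i * k i).sum)
            + -(L.map fun x => (L.map fun i => if x < i then 2 * U x i * k i * l x else 0).sum).sum := by
          rw [ih h2]
      _ = _ := by
          conv_rhs => rw [List.map_cons, List.sum_cons, inner_a,
            List.map_congr_left inner_x, hsum]
          ring

lemma qtC_finRange :
    qtC U k l (List.finRange p)
      = -(2 * ∑ i, ∑ j, if i < j then U i j * k j * l i else 0) := by
  rw [qtC_pairwise U k l (List.finRange p) (List.pairwise_lt_finRange p)]
  congr 1
  calc (List.map (fun a => (List.map (fun i => if a < i then 2 * U a i * k i * l a else 0)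
          (List.finRange p)).sum) (List.finRange p)).sum
      = ∑ a, ∑ i, if a < i then 2 * U a i * k i * l a else 0 := by
        simp only [Fin.sum_univ_def]
    _ = 2 * ∑ i, ∑ j, if i < j then U i j * k j * l i else 0 := by
        rw [Finset.mul_sum]
        refine Finset.sum_congr rfl fun a _ => ?_
        rw [Finset.mul_sum]
        refine Finset.sum_congr rfl fun i _ => ?_
        by_cases h : a < i <;> simp [h] <;> ring

lemma qt_exponent (hU : ∀ i j, U j i = -U i j) :
    -weylExp U k + -weylExp U l + qtC U k l (List.finRange p) + weylExp U (k + l)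
      = formU U k l := by
  have h1 := qt_weyl_add U k l
  have h2 := qt_formU_eq U k l hU
  have h3 := qtC_finRange U k l
  linarith [h1, h2, h3]

end Sums

section Assembly
variable {R : Type} [CommRing R] {p : ℕ} {A : Type} [Ring A] [Algebra R A]

lemma qt_ordered_eq (x : Fin p → Aˣ) (k : Fin p → ℤ) :
    orderedProd x k = ((qtPL x k (List.finRange p) : Aˣ) : A) := by
  have h := map_list_prod (Units.coeHom A) ((List.finRange p).map fun i => x i ^ k i)
  simpa [orderedProd, qtPL, List.map_map, Function.comp_def, Units.coeHom_apply] using h.symm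

lemma qt_mul (s : Rˣ) (U : Matrix (Fin p) (Fin p) ℤ) (hU : ∀ i j, U j i = -U i j)
    (x : Fin p → Aˣ) (b : Module.Basis (Fin p → ℤ) R A) (h : IsQuantumTorus s U x b)
    (k l : Fin p → ℤ) :
    b k * b l = ((s ^ formU U k l : Rˣ) : R) • b (k + l) := by
  obtain ⟨hx, hb⟩ := h
  set t : Aˣ := Units.map (algebraMap R A).toMonoidHom s with htdef
  have htval : ∀ e : ℤ, ((t ^ e : Aˣ) : A) = algebraMap R A ((s ^ e : Rˣ) : R) := by
    intro e; rw [htdef, ← map_zpow]; rfl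
  have ht : ∀ g : Aˣ, Commute t g := by
    intro g
    have : (t : A) * (g : A) = (g : A) * (t : A) := Algebra.commutes _ _
    exact Units.ext (by simpa [Units.val_mul] using this)
  have hxu : ∀ i j, x i * x j = t ^ (2 * U i j) * (x j * x i) := by
    intro i j
    apply Units.ext
    rw [Units.val_mul, Units.val_mul, Units.val_mul, htval, hx i j, Algebra.smul_def]
  have hmerge := qt_merge U t x ht hxu k l (List.finRange p)
  have hmval : ((qtPL x k (List.finRange p) : Aˣ) : A) * ((qtPL x l (List.finRange p) : Aˣ) : A)
      = ((s ^ qtC U k l (List.finRange p) : Rˣ) : R)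
          • ((qtPL x (k + l) (List.finRange p) : Aˣ) : A) := by
    rw [← Units.val_mul, hmerge, Units.val_mul, htval, ← Algebra.smul_def]
  rw [hb k, hb l, hb (k + l)]
  unfold normMono
  rw [qt_ordered_eq, qt_ordered_eq, qt_ordered_eq, smul_mul_smul_comm, hmval,
    smul_smul, smul_smul]
  congr 1
  rw [← Units.val_mul, ← Units.val_mul, ← Units.val_mul]
  congr 1
  rw [← zpow_add, ← zpow_add, ← zpow_add]
  congr 1
  have := qt_exponent U k l hU
  linarith

end Assembly

lemma qt_zpow_eq_zero {R : Type} [CommRing R] (s : Rˣ)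
    (hq : ∀ n : ℕ, 0 < n → (s ^ 2) ^ n ≠ 1) (m : ℤ) (hm : (s ^ 2 : Rˣ) ^ m = 1) :
    m = 0 := by
  rcases lt_trichotomy m 0 with h | h | h
  · exfalso
    apply hq (-m).toNat (by omega)
    rw [← zpow_natCast, Int.toNat_of_nonneg (by omega : (0:ℤ) ≤ -m), zpow_neg, hm, inv_one]
  · exact h
  · exfalso
    apply hq m.toNat (by omega)
    rw [← zpow_natCast, Int.toNat_of_nonneg h.le, hm]

/-- If `q = s²` is not a root of unity (in a commutative domain `R`), the center of the
quantum torus `T(U)` is the `R`-span of the normalized monomials `X^k` with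
`⟨k, l⟩_U = 0` for all `l ∈ ℤ^p`. -/
theorem center_quantumTorus_generic {R : Type} [CommRing R] [IsDomain R] {p : ℕ}
    (s : Rˣ) (U : Matrix (Fin p) (Fin p) ℤ) (hU : ∀ i j, U j i = -U i j)
    (hq : ∀ n : ℕ, 0 < n → (s ^ 2) ^ n ≠ 1)
    {A : Type} [Ring A] [Algebra R A]
    (x : Fin p → Aˣ) (b : Module.Basis (Fin p → ℤ) R A) (h : IsQuantumTorus s U x b) :
    (Subalgebra.center R A : Set A)
      = (Submodule.span R
          {a : A | ∃ k : Fin p → ℤ, (∀ l : Fin p → ℤ, formU U k l = 0) ∧ a = b k}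
          : Set A) := by
  have M : ∀ k l, b k * b l = ((s ^ formU U k l : Rˣ) : R) • b (k + l) := qt_mul s U hU x b h
  apply Set.Subset.antisymm
  · -- center ⊆ span
    intro a ha
    have hcen : ∀ y, y * a = a * y := Subalgebra.mem_center_iff.mp ha
    have key : ∀ k0 l, b.repr a k0 * ((s ^ formU U k0 l : Rˣ) : R)
        = b.repr a k0 * ((s ^ formU U l k0 : Rˣ) : R) := by
      intro k0 l
      have e1 : a * b l = (b.repr a).sum fun k ck =>
          (ck * ((s ^ formU U k l : Rˣ) : R)) • b (k + l) := by
        conv_lhs => rw [← b.linearCombination_repr a]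
        rw [Finsupp.linearCombination_apply, Finsupp.sum_mul]
        refine Finsupp.sum_congr fun k _ => ?_
        rw [smul_mul_assoc, M k l, smul_smul]
      have e2 : a * b l = (b.repr a).sum fun k ck =>
          (ck * ((s ^ formU U l k : Rˣ) : R)) • b (k + l) := by
        rw [← hcen (b l)]
        conv_lhs => rw [← b.linearCombination_repr a]
        rw [Finsupp.linearCombination_apply, Finsupp.mul_sum]
        refine Finsupp.sum_congr fun k _ => ?_
        rw [mul_smul_comm, M l k, smul_smul, add_comm l k]
      have e3 := congrArg (fun z => b.repr z (k0 + l)) (e1.symm.trans e2)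
      simp only [map_finsuppSum, map_smul, Module.Basis.repr_self, Finsupp.smul_single,
        smul_eq_mul, mul_one, Finsupp.sum_apply, Finsupp.single_apply, add_left_inj] at e3
      rw [Finsupp.sum_ite_eq', Finsupp.sum_ite_eq'] at e3
      by_cases hmem : k0 ∈ (b.repr a).support
      · simpa [hmem] using e3
      · have h0 : b.repr a k0 = 0 := Finsupp.notMem_support_iff.mp hmem
        simp [h0]
    have key2 : ∀ k0, b.repr a k0 ≠ 0 → ∀ l, formU U k0 l = 0 := by
      intro k0 hk0 l
      have h6 : ((s ^ formU U k0 l : Rˣ) : R) = ((s ^ formU U l k0 : Rˣ) : R) :=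
        mul_left_cancel₀ hk0 (key k0 l)
      have h7 : (s ^ formU U k0 l : Rˣ) = s ^ formU U l k0 := Units.ext h6
      rw [qt_formU_skew U k0 l hU] at h7
      refine qt_zpow_eq_zero s hq _ ?_
      rw [sq, mul_zpow]
      nth_rewrite 1 [h7]
      rw [← zpow_add]
      simp
    show a ∈ (Submodule.span R _ : Submodule R A)
    have hrepr : a = (b.repr a).sum fun k ck => ck • b k := by
      conv_lhs => rw [← b.linearCombination_repr a]
      rw [Finsupp.linearCombination_apply]
    rw [hrepr]
    apply Submodule.finsuppSum_mem
    intro k hk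
    exact Submodule.smul_mem _ _ (Submodule.subset_span ⟨k, key2 k hk, rfl⟩)
  · -- span ⊆ center
    have hsub : {a : A | ∃ k, (∀ l, formU U k l = 0) ∧ a = b k}
        ⊆ (Subalgebra.toSubmodule (Subalgebra.center R A) : Set A) := by
      rintro a ⟨k, hk, rfl⟩
      simp only [SetLike.mem_coe, Subalgebra.mem_toSubmodule]
      rw [Subalgebra.mem_center_iff]
      intro y
      have heq : LinearMap.mulRight R (b k) = LinearMap.mulLeft R (b k) := by
        apply b.ext; intro l
        simp only [LinearMap.mulRight_apply, LinearMap.mulLeft_apply]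
        rw [M l k, M k l, hk l, qt_formU_skew U k l hU, hk l, add_comm l k]
        norm_num
      have := LinearMap.ext_iff.mp heq y
      simpa using this
    intro a ha
    exact (Submodule.span_le.mpr hsub) ha
end
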